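/- Let p ≥ 2 and x = 1 − ε with ε ∈ (0,1). Then (1 − ε/2)^p ≤ (1 − δ)·(1 + (1−ε)^p)/2 holds with δ = (ε/2)^p · 2/(1 + (1−ε)^p), and moreover δ ≥ (ε/2)^p. -/

import Mathlib

lemma aux_add_rpow_le (x y p : ℝ) (hx : 0 ≤ x) (hy : 0 ≤ y) (hp : 1 ≤ p) :
    x ^ p + y ^ p ≤ (x + y) ^ p := by
  have h := NNReal.add_rpow_le_rpow_add (⟨x, hx⟩ : NNReal) (⟨y, hy⟩ : NNReal) hp
  have := (NNReal.coe_le_coe).mpr h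
  push_cast at this
  exact this

theorem stmt_13 (p ε : ℝ) (hp : 2 ≤ p) (hε0 : 0 < ε) (hε1 : ε < 1) :
    (1 - ε / 2) ^ p ≤
        (1 - (ε / 2) ^ p * 2 / (1 + (1 - ε) ^ p)) * (1 + (1 - ε) ^ p) / 2 ∧
      (ε / 2) ^ p ≤ (ε / 2) ^ p * 2 / (1 + (1 - ε) ^ p) := by
  set x := 1 - ε with hxdef
  have hx0 : 0 < x := by simp [hxdef]; linarith
  have hx1 : x < 1 := by simp [hxdef]; linarith
  have hS0 : 0 < x ^ p := Real.rpow_pos_of_pos hx0 p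
  have hS1 : x ^ p ≤ 1 :=
    (Real.rpow_le_one hx0.le hx1.le (by linarith)).trans_eq rfl
  have hden : 0 < 1 + x ^ p := by linarith
  have hc0 : 0 ≤ (ε / 2) ^ p := (Real.rpow_pos_of_pos (by linarith) p).le
  constructor
  · -- main Clarkson-type inequality
    have hq : 1 ≤ p / 2 := by linarith
    have hu0 : (0:ℝ) ≤ 1 - ε / 2 := by linarith
    have hv0 : (0:ℝ) ≤ ε / 2 := by linarith
    -- Step A: u^p + v^p ≤ (u² + v²)^(p/2)
    have hA : (1 - ε / 2) ^ p + (ε / 2) ^ p ≤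
        ((1 - ε / 2) ^ (2:ℝ) + (ε / 2) ^ (2:ℝ)) ^ (p / 2) := by
      have h1 : (1 - ε / 2) ^ p = ((1 - ε / 2) ^ (2:ℝ)) ^ (p / 2) := by
        rw [← Real.rpow_mul hu0]; congr 1; ring
      have h2 : (ε / 2) ^ p = ((ε / 2) ^ (2:ℝ)) ^ (p / 2) := by
        rw [← Real.rpow_mul hv0]; congr 1; ring
      rw [h1, h2]
      exact aux_add_rpow_le _ _ _ (Real.rpow_nonneg hu0 _) (Real.rpow_nonneg hv0 _) hq
    -- u² + v² = (1 + x²)/2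
    have hsum : (1 - ε / 2) ^ (2:ℝ) + (ε / 2) ^ (2:ℝ) = (1 + x ^ (2:ℝ)) / 2 := by
      rw [Real.rpow_two, Real.rpow_two, Real.rpow_two]
      simp only [hxdef]; ring
    -- Step C: ((1 + x²)/2)^(p/2) ≤ (1 + x^p)/2
    have hx2 : (0:ℝ) ≤ x ^ (2:ℝ) := Real.rpow_nonneg hx0.le _
    have hC : ((1 + x ^ (2:ℝ)) / 2) ^ (p / 2) ≤ (1 + (x ^ (2:ℝ)) ^ (p / 2)) / 2 := by
      have h := (convexOn_rpow hq).2 (Set.mem_Ici.mpr (zero_le_one)) (Set.mem_Ici.mpr hx2)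
        (by norm_num : (0:ℝ) ≤ 1/2) (by norm_num : (0:ℝ) ≤ 1/2) (by norm_num)
      simp only [smul_eq_mul, Real.one_rpow] at h
      calc ((1 + x ^ (2:ℝ)) / 2) ^ (p / 2)
          = (1/2 * 1 + 1/2 * x ^ (2:ℝ)) ^ (p / 2) := by ring_nf
        _ ≤ 1/2 * 1 + 1/2 * (x ^ (2:ℝ)) ^ (p / 2) := h
        _ = (1 + (x ^ (2:ℝ)) ^ (p / 2)) / 2 := by ring
    have hxp : (x ^ (2:ℝ)) ^ (p / 2) = x ^ p := by
      rw [← Real.rpow_mul hx0.le]; congr 1; ring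
    have hkey : (1 - ε / 2) ^ p + (ε / 2) ^ p ≤ (1 + x ^ p) / 2 := by
      calc (1 - ε / 2) ^ p + (ε / 2) ^ p ≤ ((1 + x ^ (2:ℝ)) / 2) ^ (p / 2) := by
            rw [← hsum]; exact hA
        _ ≤ (1 + (x ^ (2:ℝ)) ^ (p / 2)) / 2 := hC
        _ = (1 + x ^ p) / 2 := by rw [hxp]
    have hrhs : (1 - (ε / 2) ^ p * 2 / (1 + x ^ p)) * (1 + x ^ p) / 2
        = (1 + x ^ p) / 2 - (ε / 2) ^ p := by
      field_simp
    rw [hrhs]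
    linarith
  · -- δ ≥ (ε/2)^p
    rw [mul_div_assoc]
    refine le_mul_of_one_le_right hc0 ?_
    rw [le_div_iff₀ hden]
    linarith
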